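/- For every R > 0, the radial function g satisfies the radial heat equation in the 3-ball: for all r ∈ (0, R) and t > 0, ∂g/∂t(r, t) = (1/2) · (∂²g/∂r²(r, t) + (2/r) · ∂g/∂r(r, t)); in particular these derivatives of the series exist at all such points. -/

import Mathlib

open Real Filter Topology MeasureTheory

/-- Radially symmetric forward Kolmogorov solution for a standard 3-dimensional
Brownian motion started at the center of the ball of radius `R` and killed at its
boundary: `g(r, t) = ∑_{k≥1} (kπ/(2πR²r)) sin(kπr/R) exp(-k²π²t/(2R²))`. -/
noncomputable def g (R r t : ℝ) : ℝ :=
  ∑' k : ℕ, (((k : ℝ) + 1) * π / (2 * π * R ^ 2 * r)) *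
    Real.sin (((k : ℝ) + 1) * π * r / R) *
    Real.exp (-(((k : ℝ) + 1) ^ 2 * π ^ 2 * t) / (2 * R ^ 2))

lemma summable_aux (m : ℕ) {a : ℝ} (ha : 0 < a) :
    Summable (fun k : ℕ => ((k : ℝ) + 1) ^ m * Real.exp (-((k : ℝ) + 1) ^ 2 * a)) := by
  have hlt : ‖Real.exp (-a)‖ < 1 := by
    rw [Real.norm_eq_abs, abs_of_pos (Real.exp_pos _)]
    exact Real.exp_lt_one_iff.mpr (neg_lt_zero.mpr ha)
  have h := summable_pow_mul_geometric_of_norm_lt_one m hlt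
  have h2 := (summable_nat_add_iff 1).2 h
  refine Summable.of_nonneg_of_le (fun k => by positivity) (fun k => ?_) h2
  push_cast
  have hk : (0:ℝ) ≤ (k : ℝ) := Nat.cast_nonneg k
  have hle : Real.exp (-((k : ℝ) + 1) ^ 2 * a) ≤ Real.exp (-a) ^ (k + 1) := by
    rw [← Real.exp_nat_mul]
    apply Real.exp_le_exp.mpr
    push_cast
    nlinarith [mul_nonneg (mul_nonneg hk hk) ha.le, mul_nonneg hk ha.le]
  have hp : (0:ℝ) ≤ ((k : ℝ) + 1) ^ m := by positivity
  exact mul_le_mul_of_nonneg_left hle hp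

noncomputable def hh (R t ρ : ℝ) : ℝ :=
  ∑' k : ℕ, (((k : ℝ) + 1) * π / (2 * π * R ^ 2)) * Real.sin (((k : ℝ) + 1) * π * ρ / R) *
    Real.exp (-(((k : ℝ) + 1) ^ 2 * π ^ 2 * t) / (2 * R ^ 2))

noncomputable def hh1 (R t ρ : ℝ) : ℝ :=
  ∑' k : ℕ, (((k : ℝ) + 1) * π / (2 * π * R ^ 2)) *
    (Real.cos (((k : ℝ) + 1) * π * ρ / R) * (((k : ℝ) + 1) * π / R)) *
    Real.exp (-(((k : ℝ) + 1) ^ 2 * π ^ 2 * t) / (2 * R ^ 2))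

noncomputable def hh2 (R t ρ : ℝ) : ℝ :=
  ∑' k : ℕ, (((k : ℝ) + 1) * π / (2 * π * R ^ 2)) *
    (-Real.sin (((k : ℝ) + 1) * π * ρ / R) * (((k : ℝ) + 1) * π / R) * (((k : ℝ) + 1) * π / R)) *
    Real.exp (-(((k : ℝ) + 1) ^ 2 * π ^ 2 * t) / (2 * R ^ 2))

section main
variable {R t r : ℝ}

lemma harg (R : ℝ) (k : ℕ) (ρ : ℝ) :
    HasDerivAt (fun ρ : ℝ => ((k : ℝ) + 1) * π * ρ / R) (((k : ℝ) + 1) * π / R) ρ := by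
  simpa using ((hasDerivAt_id ρ).const_mul (((k : ℝ) + 1) * π)).div_const R

lemma hexp_eq (R t : ℝ) (k : ℕ) :
    Real.exp (-(((k : ℝ) + 1) ^ 2 * π ^ 2 * t) / (2 * R ^ 2))
      = Real.exp (-((k : ℝ) + 1) ^ 2 * (π ^ 2 * t / (2 * R ^ 2))) := by
  congr 1; ring

lemma usummable (hR : 0 < R) (ht : 0 < t) (c : ℝ) (m : ℕ) :
    Summable (fun k : ℕ => c * ((k : ℝ) + 1) ^ m *
      Real.exp (-(((k : ℝ) + 1) ^ 2 * π ^ 2 * t) / (2 * R ^ 2))) := by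
  have ha : 0 < π ^ 2 * t / (2 * R ^ 2) := by positivity
  have := (summable_aux m ha).mul_left c
  refine this.congr fun k => ?_
  rw [hexp_eq R t k]; ring

lemma hbound1 (hR : 0 < R) (k : ℕ) (ρ : ℝ) :
    ‖(((k : ℝ) + 1) * π / (2 * π * R ^ 2)) *
      (Real.cos (((k : ℝ) + 1) * π * ρ / R) * (((k : ℝ) + 1) * π / R)) *
      Real.exp (-(((k : ℝ) + 1) ^ 2 * π ^ 2 * t) / (2 * R ^ 2))‖ ≤
    (((k : ℝ) + 1) * π / (2 * π * R ^ 2) * (((k : ℝ) + 1) * π / R)) *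
      Real.exp (-(((k : ℝ) + 1) ^ 2 * π ^ 2 * t) / (2 * R ^ 2)) := by
  have hc : (0:ℝ) ≤ ((k : ℝ) + 1) * π / (2 * π * R ^ 2) := by positivity
  have hB : (0:ℝ) ≤ ((k : ℝ) + 1) * π / R := by positivity
  have hcos := Real.abs_cos_le_one (((k : ℝ) + 1) * π * ρ / R)
  rw [Real.norm_eq_abs, abs_mul, abs_mul, abs_mul,
    abs_of_nonneg hc, abs_of_nonneg hB, abs_of_nonneg (Real.exp_pos _).le]
  calc (((k : ℝ) + 1) * π / (2 * π * R ^ 2)) *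
      (|Real.cos (((k : ℝ) + 1) * π * ρ / R)| * (((k : ℝ) + 1) * π / R)) *
      Real.exp (-(((k : ℝ) + 1) ^ 2 * π ^ 2 * t) / (2 * R ^ 2))
      ≤ (((k : ℝ) + 1) * π / (2 * π * R ^ 2)) * (1 * (((k : ℝ) + 1) * π / R)) *
        Real.exp (-(((k : ℝ) + 1) ^ 2 * π ^ 2 * t) / (2 * R ^ 2)) := by gcongr
    _ = (((k : ℝ) + 1) * π / (2 * π * R ^ 2) * (((k : ℝ) + 1) * π / R)) *
        Real.exp (-(((k : ℝ) + 1) ^ 2 * π ^ 2 * t) / (2 * R ^ 2)) := by ring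

lemma sum1 (hR : 0 < R) (ht : 0 < t) : Summable (fun k : ℕ =>
    (((k : ℝ) + 1) * π / (2 * π * R ^ 2) * (((k : ℝ) + 1) * π / R)) *
      Real.exp (-(((k : ℝ) + 1) ^ 2 * π ^ 2 * t) / (2 * R ^ 2))) := by
  refine (usummable hR ht (π / (2 * R ^ 3)) 2).congr fun k => ?_
  have hπ := Real.pi_ne_zero
  have hRne := hR.ne'
  field_simp

lemma H1lem (hR : 0 < R) (ht : 0 < t) (ρ : ℝ) : HasDerivAt (hh R t) (hh1 R t ρ) ρ := by
  refine hasDerivAt_tsum (y₀ := 0) (sum1 hR ht) (fun k y => ?_) (fun k y => hbound1 hR k y)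
    ?_ ρ
  · have hs := (Real.hasDerivAt_sin (((k : ℝ) + 1) * π * y / R)).comp y (harg R k y)
    exact (hs.const_mul (((k : ℝ) + 1) * π / (2 * π * R ^ 2))).mul_const _
  · refine (summable_zero).congr fun k => ?_
    simp

lemma hbound2 (hR : 0 < R) (k : ℕ) (ρ : ℝ) :
    ‖(((k : ℝ) + 1) * π / (2 * π * R ^ 2)) *
      (-Real.sin (((k : ℝ) + 1) * π * ρ / R) * (((k : ℝ) + 1) * π / R) * (((k : ℝ) + 1) * π / R)) *
      Real.exp (-(((k : ℝ) + 1) ^ 2 * π ^ 2 * t) / (2 * R ^ 2))‖ ≤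
    (((k : ℝ) + 1) * π / (2 * π * R ^ 2) * (((k : ℝ) + 1) * π / R) * (((k : ℝ) + 1) * π / R)) *
      Real.exp (-(((k : ℝ) + 1) ^ 2 * π ^ 2 * t) / (2 * R ^ 2)) := by
  have hc : (0:ℝ) ≤ ((k : ℝ) + 1) * π / (2 * π * R ^ 2) := by positivity
  have hB : (0:ℝ) ≤ ((k : ℝ) + 1) * π / R := by positivity
  have hsin : |(-Real.sin (((k : ℝ) + 1) * π * ρ / R))| ≤ 1 := by
    rw [abs_neg]; exact Real.abs_sin_le_one _
  rw [Real.norm_eq_abs, abs_mul, abs_mul, abs_mul, abs_mul,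
    abs_of_nonneg hc, abs_of_nonneg hB, abs_of_nonneg (Real.exp_pos _).le]
  calc (((k : ℝ) + 1) * π / (2 * π * R ^ 2)) *
      (|(-Real.sin (((k : ℝ) + 1) * π * ρ / R))| * (((k : ℝ) + 1) * π / R) * (((k : ℝ) + 1) * π / R)) *
      Real.exp (-(((k : ℝ) + 1) ^ 2 * π ^ 2 * t) / (2 * R ^ 2))
      ≤ (((k : ℝ) + 1) * π / (2 * π * R ^ 2)) *
        (1 * (((k : ℝ) + 1) * π / R) * (((k : ℝ) + 1) * π / R)) *
        Real.exp (-(((k : ℝ) + 1) ^ 2 * π ^ 2 * t) / (2 * R ^ 2)) := by gcongr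
    _ = (((k : ℝ) + 1) * π / (2 * π * R ^ 2) * (((k : ℝ) + 1) * π / R) * (((k : ℝ) + 1) * π / R)) *
        Real.exp (-(((k : ℝ) + 1) ^ 2 * π ^ 2 * t) / (2 * R ^ 2)) := by ring

lemma sum2 (hR : 0 < R) (ht : 0 < t) : Summable (fun k : ℕ =>
    (((k : ℝ) + 1) * π / (2 * π * R ^ 2) * (((k : ℝ) + 1) * π / R) * (((k : ℝ) + 1) * π / R)) *
      Real.exp (-(((k : ℝ) + 1) ^ 2 * π ^ 2 * t) / (2 * R ^ 2))) := by
  refine (usummable hR ht (π ^ 2 / (2 * R ^ 4)) 3).congr fun k => ?_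
  have hπ := Real.pi_ne_zero
  have hRne := hR.ne'
  field_simp

lemma H2lem (hR : 0 < R) (ht : 0 < t) (ρ : ℝ) : HasDerivAt (hh1 R t) (hh2 R t ρ) ρ := by
  refine hasDerivAt_tsum (y₀ := 0) (sum2 hR ht) (fun k y => ?_) (fun k y => hbound2 hR k y)
    ?_ ρ
  · have hc := ((Real.hasDerivAt_cos (((k : ℝ) + 1) * π * y / R)).comp y (harg R k y)).mul_const
      (((k : ℝ) + 1) * π / R)
    exact (hc.const_mul (((k : ℝ) + 1) * π / (2 * π * R ^ 2))).mul_const _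
  · exact Summable.of_norm_bounded (sum1 hR ht) (fun k => hbound1 hR k 0)

lemma geq (R t : ℝ) : (fun ρ => g R ρ t) = fun ρ => hh R t ρ / ρ := by
  funext ρ
  rw [g, hh, ← tsum_div_const]
  exact tsum_congr fun k => by ring

end main

section tpart
variable {R t r : ℝ}

lemma HTlem (hR : 0 < R) (hr0 : 0 < r) (ht : 0 < t) :
    HasDerivAt (fun s => g R r s)
      (∑' k : ℕ, ((((k : ℝ) + 1) * π / (2 * π * R ^ 2 * r)) *
          Real.sin (((k : ℝ) + 1) * π * r / R)) *
        (Real.exp (-(((k : ℝ) + 1) ^ 2 * π ^ 2 * t) / (2 * R ^ 2)) *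
          (-(((k : ℝ) + 1) ^ 2 * π ^ 2) / (2 * R ^ 2)))) t := by
  have hfun : (fun s => g R r s) = fun s => ∑' k : ℕ,
      (((k : ℝ) + 1) * π / (2 * π * R ^ 2 * r)) * Real.sin (((k : ℝ) + 1) * π * r / R) *
        Real.exp (-(((k : ℝ) + 1) ^ 2 * π ^ 2 * s) / (2 * R ^ 2)) := by
    funext s; rw [g]
  rw [hfun]
  have hc' : ∀ k : ℕ, (0:ℝ) ≤ ((k : ℝ) + 1) * π / (2 * π * R ^ 2 * r) := fun k => by positivity
  have hA : ∀ k : ℕ, |(((k : ℝ) + 1) * π / (2 * π * R ^ 2 * r)) *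
      Real.sin (((k : ℝ) + 1) * π * r / R)| ≤ ((k : ℝ) + 1) * π / (2 * π * R ^ 2 * r) := by
    intro k
    rw [abs_mul, abs_of_nonneg (hc' k)]
    exact mul_le_of_le_one_right (hc' k) (Real.abs_sin_le_one _)
  have husum : Summable (fun k : ℕ =>
      ((((k : ℝ) + 1) * π / (2 * π * R ^ 2 * r)) * ((((k : ℝ) + 1) ^ 2 * π ^ 2) / (2 * R ^ 2))) *
        Real.exp (-(((k : ℝ) + 1) ^ 2 * π ^ 2 * (t / 2)) / (2 * R ^ 2))) := by
    refine (usummable hR (half_pos ht) (π ^ 2 / (4 * R ^ 4 * r)) 3).congr fun k => ?_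
    have hπ := Real.pi_ne_zero
    field_simp
    ring
  refine hasDerivAt_tsum_of_isPreconnected
    (g' := fun (k : ℕ) (s : ℝ) => ((((k : ℝ) + 1) * π / (2 * π * R ^ 2 * r)) *
        Real.sin (((k : ℝ) + 1) * π * r / R)) *
      (Real.exp (-(((k : ℝ) + 1) ^ 2 * π ^ 2 * s) / (2 * R ^ 2)) *
        (-(((k : ℝ) + 1) ^ 2 * π ^ 2) / (2 * R ^ 2))))
    husum isOpen_Ioi isPreconnected_Ioi
    (fun k s hs => ?_) (fun k s hs => ?_) (Set.mem_Ioi.mpr (half_lt_self ht)) ?_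
    (Set.mem_Ioi.mpr (half_lt_self ht))
  · have hlin : HasDerivAt (fun s : ℝ => -(((k : ℝ) + 1) ^ 2 * π ^ 2 * s) / (2 * R ^ 2))
        (-(((k : ℝ) + 1) ^ 2 * π ^ 2) / (2 * R ^ 2)) s := by
      simpa using (((hasDerivAt_id s).const_mul (((k : ℝ) + 1) ^ 2 * π ^ 2)).neg.div_const
        (2 * R ^ 2))
    exact hlin.exp.const_mul _
  · rw [Real.norm_eq_abs, abs_mul,
      abs_mul (Real.exp (-(((k : ℝ) + 1) ^ 2 * π ^ 2 * s) / (2 * R ^ 2)))]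
    have h3 : |(-(((k : ℝ) + 1) ^ 2 * π ^ 2) / (2 * R ^ 2))| =
        (((k : ℝ) + 1) ^ 2 * π ^ 2) / (2 * R ^ 2) := by
      rw [abs_div, abs_neg, abs_of_nonneg (by positivity : (0:ℝ) ≤ ((k : ℝ) + 1) ^ 2 * π ^ 2),
        abs_of_nonneg (by positivity : (0:ℝ) ≤ 2 * R ^ 2)]
    rw [h3]
    have h2 : |Real.exp (-(((k : ℝ) + 1) ^ 2 * π ^ 2 * s) / (2 * R ^ 2))| ≤
        Real.exp (-(((k : ℝ) + 1) ^ 2 * π ^ 2 * (t / 2)) / (2 * R ^ 2)) := by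
      rw [abs_of_pos (Real.exp_pos _)]
      apply Real.exp_le_exp.mpr
      have hs' : t / 2 ≤ s := (Set.mem_Ioi.mp hs).le
      gcongr
    calc |(((k : ℝ) + 1) * π / (2 * π * R ^ 2 * r)) * Real.sin (((k : ℝ) + 1) * π * r / R)| *
        (|Real.exp (-(((k : ℝ) + 1) ^ 2 * π ^ 2 * s) / (2 * R ^ 2))| *
          ((((k : ℝ) + 1) ^ 2 * π ^ 2) / (2 * R ^ 2)))
        ≤ (((k : ℝ) + 1) * π / (2 * π * R ^ 2 * r)) *
          (Real.exp (-(((k : ℝ) + 1) ^ 2 * π ^ 2 * (t / 2)) / (2 * R ^ 2)) *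
            ((((k : ℝ) + 1) ^ 2 * π ^ 2) / (2 * R ^ 2))) := by
          gcongr
          · exact hA k
      _ = ((((k : ℝ) + 1) * π / (2 * π * R ^ 2 * r)) * ((((k : ℝ) + 1) ^ 2 * π ^ 2) / (2 * R ^ 2))) *
          Real.exp (-(((k : ℝ) + 1) ^ 2 * π ^ 2 * (t / 2)) / (2 * R ^ 2)) := by ring
  · have hs0 : Summable (fun k : ℕ => (((k : ℝ) + 1) * π / (2 * π * R ^ 2 * r)) *
        Real.exp (-(((k : ℝ) + 1) ^ 2 * π ^ 2 * t) / (2 * R ^ 2))) := by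
      refine (usummable hR ht (π / (2 * π * R ^ 2 * r)) 1).congr fun k => by ring
    refine Summable.of_norm_bounded hs0 fun k => ?_
    rw [Real.norm_eq_abs, abs_mul, abs_of_pos (Real.exp_pos _)]
    gcongr
    exact hA k

end tpart

/-- `g` satisfies the radial heat equation in the 3-ball:
`∂g/∂t = (1/2)(∂²g/∂r² + (2/r) ∂g/∂r)` for all `r ∈ (0, R)` and `t > 0`;
in particular these derivatives of the series exist at all such points. -/
theorem g_satisfies_radial_heat_equation (R : ℝ) (hR : 0 < R) (r t : ℝ)
    (hr : r ∈ Set.Ioo 0 R) (ht : 0 < t) :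
    DifferentiableAt ℝ (fun s => g R r s) t ∧
    DifferentiableAt ℝ (fun ρ => g R ρ t) r ∧
    DifferentiableAt ℝ (deriv (fun ρ => g R ρ t)) r ∧
    deriv (fun s => g R r s) t =
      (1 / 2) * (deriv (deriv (fun ρ => g R ρ t)) r +
        (2 / r) * deriv (fun ρ => g R ρ t) r) := by
  obtain ⟨hr0, hrR⟩ := hr
  have hrne : r ≠ 0 := hr0.ne'
  have DT := HTlem hR hr0 ht
  have DG : ∀ ρ : ℝ, ρ ≠ 0 → HasDerivAt (fun ρ => g R ρ t)
      ((hh1 R t ρ * ρ - hh R t ρ) / ρ ^ 2) ρ := by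
    intro ρ hρ
    rw [geq R t]
    have := (H1lem hR ht ρ).div (hasDerivAt_id' ρ) hρ
    simp only [mul_one] at this
    exact this
  have EQd : deriv (fun ρ => g R ρ t) =ᶠ[𝓝 r]
      (fun ρ => (hh1 R t ρ * ρ - hh R t ρ) / ρ ^ 2) := by
    filter_upwards [eventually_ne_nhds hrne] with ρ hρ using (DG ρ hρ).deriv
  have DF := (((H2lem hR ht r).mul (hasDerivAt_id r)).sub (H1lem hR ht r)).div
    (hasDerivAt_pow 2 r) (pow_ne_zero 2 hrne)
  have DF' : HasDerivAt (fun ρ => (hh1 R t ρ * ρ - hh R t ρ) / ρ ^ 2)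
      (((hh2 R t r * r + hh1 R t r * 1 - hh1 R t r) * r ^ 2 -
        (hh1 R t r * r - hh R t r) * ((2 : ℕ) * r ^ (2 - 1))) / (r ^ 2) ^ 2) r := DF
  refine ⟨DT.differentiableAt, (DG r hrne).differentiableAt, ?_, ?_⟩
  · exact (EQd.differentiableAt_iff).mpr DF'.differentiableAt
  · rw [DT.deriv, EQd.deriv_eq, DF'.deriv, (DG r hrne).deriv]
    have key : (∑' k : ℕ, ((((k : ℝ) + 1) * π / (2 * π * R ^ 2 * r)) *
          Real.sin (((k : ℝ) + 1) * π * r / R)) *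
        (Real.exp (-(((k : ℝ) + 1) ^ 2 * π ^ 2 * t) / (2 * R ^ 2)) *
          (-(((k : ℝ) + 1) ^ 2 * π ^ 2) / (2 * R ^ 2)))) = hh2 R t r / (2 * r) := by
      rw [hh2, ← tsum_div_const]
      refine tsum_congr fun k => ?_
      have hπ := Real.pi_ne_zero
      have hRne : R ≠ 0 := hR.ne'
      field_simp
    rw [key]
    norm_num
    field_simp
    ring
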